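/- Let k be a finite field of odd characteristic and A ∈ k^{n×n} a symmetric invertible matrix. Then there exists X ∈ GL_n(k) with A = X X^T if and only if det(A) is a nonzero square in k. -/

import Mathlib

open Matrix

section Aux

variable {k : Type*} [Field k] [Fintype k]

private lemma aux_binary (hq : ringChar k ≠ 2) {a b : k} (ha : a ≠ 0) (hb : b ≠ 0) :
    ∃ x y : k, a * x ^ 2 + b * y ^ 2 = 1 := by
  classical
  obtain ⟨x, y, hxy⟩ := FiniteField.exists_root_sum_quadratic
    (f := Polynomial.C a * Polynomial.X ^ 2 + Polynomial.C 0 * Polynomial.X + Polynomial.C (-1))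
    (g := Polynomial.C b * Polynomial.X ^ 2 + Polynomial.C 0 * Polynomial.X + Polynomial.C 0)
    (Polynomial.degree_quadratic ha) (Polynomial.degree_quadratic hb)
    (FiniteField.odd_card_of_char_ne_two hq)
  refine ⟨x, y, ?_⟩
  simp only [Polynomial.eval_add, Polynomial.eval_mul, Polynomial.eval_pow, Polynomial.eval_C,
    Polynomial.eval_X] at hxy
  linear_combination hxy

private lemma aux_transport {ι ι' : Type*} [Fintype ι] [DecidableEq ι] [Fintype ι']
    [DecidableEq ι'] (e : ι' ≃ ι) (d : ι → k)
    (h : ∃ X : Matrix ι' ι' k, IsUnit X.det ∧ diagonal (d ∘ e) = X * Xᵀ) :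
    ∃ X : Matrix ι ι k, IsUnit X.det ∧ diagonal d = X * Xᵀ := by
  obtain ⟨X, hX, hfac⟩ := h
  refine ⟨X.submatrix e.symm e.symm, ?_, ?_⟩
  · rwa [Matrix.det_submatrix_equiv_self]
  · have h2 : (diagonal (d ∘ e)).submatrix e.symm e.symm = diagonal d := by
      rw [Matrix.submatrix_diagonal _ _ e.symm.injective]
      have h3 : (d ∘ ⇑e) ∘ ⇑e.symm = d := funext fun i => congrArg d (e.apply_symm_apply i)
      rw [h3]
    rw [← h2, hfac, Matrix.transpose_submatrix, Matrix.submatrix_mul_equiv]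

private lemma aux_congr {ι : Type*} [Fintype ι] [DecidableEq ι]
    (N A Bm : Matrix ι ι k) (hN : IsUnit N.det) (h : N * A * Nᵀ = Bm)
    (hB : ∃ X : Matrix ι ι k, IsUnit X.det ∧ Bm = X * Xᵀ) :
    ∃ X : Matrix ι ι k, IsUnit X.det ∧ A = X * Xᵀ := by
  obtain ⟨Y, hY, hfac⟩ := hB
  have hNT : IsUnit Nᵀ.det := by rwa [Matrix.det_transpose]
  refine ⟨N⁻¹ * Y, ?_, ?_⟩
  · rw [Matrix.det_mul]; exact (N.isUnit_nonsing_inv_det hN).mul hY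
  · have hA : A = N⁻¹ * Bm * (N⁻¹)ᵀ := by
      rw [← h, Matrix.transpose_nonsing_inv]
      rw [← Matrix.mul_assoc, ← Matrix.mul_assoc, Matrix.nonsing_inv_mul _ hN, Matrix.one_mul,
        Matrix.mul_assoc, Matrix.mul_nonsing_inv _ hNT, Matrix.mul_one]
    rw [hA, hfac, Matrix.transpose_mul]
    simp only [Matrix.mul_assoc]

private lemma aux_block {α β : Type*} [Fintype α] [DecidableEq α] [Fintype β] [DecidableEq β]
    (u : α → k) (w : β → k)
    (hu : ∃ Z : Matrix α α k, IsUnit Z.det ∧ diagonal u = Z * Zᵀ)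
    (hw : ∃ Y : Matrix β β k, IsUnit Y.det ∧ diagonal w = Y * Yᵀ) :
    ∃ X : Matrix (α ⊕ β) (α ⊕ β) k, IsUnit X.det ∧ diagonal (Sum.elim u w) = X * Xᵀ := by
  obtain ⟨Z, hZ, hZf⟩ := hu; obtain ⟨Y, hY, hYf⟩ := hw
  refine ⟨fromBlocks Z 0 0 Y, ?_, ?_⟩
  · rw [Matrix.det_fromBlocks_zero₁₂]; exact hZ.mul hY
  · rw [← Matrix.fromBlocks_diagonal, hZf, hYf, Matrix.fromBlocks_transpose,
      Matrix.fromBlocks_multiply]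
    simp

private lemma aux_two (hq : ringChar k ≠ 2) {a b : k} (ha : a ≠ 0) (hb : b ≠ 0) :
    ∃ N : Matrix (Fin 2) (Fin 2) k, IsUnit N.det ∧
      N * diagonal ![a, b] * Nᵀ = diagonal ![1, a * b] := by
  obtain ⟨x, y, hxy⟩ := aux_binary hq ha hb
  have hdg : ∀ p q : k, diagonal ![p, q] = !![p, 0; 0, q] := by
    intro p q; ext i j
    fin_cases i <;> fin_cases j <;> simp [Matrix.diagonal_apply]
  refine ⟨!![x, y; -b * y, a * x], ?_, ?_⟩
  · rw [Matrix.det_fin_two_of]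
    have h1 : x * (a * x) - y * (-b * y) = 1 := by linear_combination hxy
    rw [h1]; exact isUnit_one
  · have htr : (!![x, y; -b * y, a * x])ᵀ = !![x, -b * y; y, a * x] := by
      ext i j; fin_cases i <;> fin_cases j <;> rfl
    rw [hdg, hdg, htr]
    ext i j
    fin_cases i
    · fin_cases j
      · simp [Matrix.mul_apply, Fin.sum_univ_two]
        try linear_combination hxy
      · simp [Matrix.mul_apply, Fin.sum_univ_two]
        try ring
    · fin_cases j
      · simp [Matrix.mul_apply, Fin.sum_univ_two]
        try ring
      · simp [Matrix.mul_apply, Fin.sum_univ_two]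
        try linear_combination (a * b) * hxy

/-- The equiv used to split off the first two coordinates. -/
private def sigmaEquiv (m : ℕ) : (Fin 1 ⊕ (Fin 1 ⊕ Fin m)) ≃ (Fin 2 ⊕ Fin m) where
  toFun := Sum.elim (fun _ => Sum.inl 0) (Sum.elim (fun _ => Sum.inl 1) fun j => Sum.inr j)
  invFun := Sum.elim (fun i => if i = 0 then Sum.inl 0 else Sum.inr (Sum.inl 0))
    fun j => Sum.inr (Sum.inr j)
  left_inv := by
    rintro (i | i | j)
    · fin_cases i; rfl
    · fin_cases i; rfl
    · rfl
  right_inv := by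
    rintro (i | j)
    · fin_cases i <;> rfl
    · rfl

private lemma diag_factor (hq : ringChar k ≠ 2) :
    ∀ (n : ℕ) (ι : Type) [Fintype ι] [DecidableEq ι], Fintype.card ι = n →
      ∀ d : ι → k, (∀ i, d i ≠ 0) → IsSquare (∏ i, d i) →
        ∃ X : Matrix ι ι k, IsUnit X.det ∧ diagonal d = X * Xᵀ := by
  intro n
  induction n using Nat.strong_induction_on with
  | _ n ih =>
    rcases n with _ | _ | m
    · intro ι _ _ hcard d _ _
      have he : IsEmpty ι := Fintype.card_eq_zero_iff.mp hcard
      exact ⟨1, by simp, by ext i j; exact (he.false i).elim⟩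
    · intro ι _ _ hcard d hd hsq
      obtain ⟨i0, hi0⟩ := Fintype.card_eq_one_iff.mp hcard
      have hprod : ∏ i, d i = d i0 :=
        Finset.prod_eq_single i0 (fun b _ hb => ((hb (hi0 b)).elim)) (by simp)
      obtain ⟨c, hc⟩ := hsq
      rw [hprod] at hc
      have hc0 : c ≠ 0 := by
        intro h0; exact hd i0 (by rw [hc, h0, mul_zero])
      refine ⟨diagonal fun _ => c, ?_, ?_⟩
      · rw [Matrix.det_diagonal]
        exact isUnit_iff_ne_zero.mpr (Finset.prod_ne_zero_iff.mpr fun _ _ => hc0)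
      · rw [Matrix.diagonal_transpose, Matrix.diagonal_mul_diagonal]
        have hdfun : d = fun _ : ι => c * c := funext fun i => by rw [hi0 i]; exact hc
        rw [hdfun]
    · intro ι _ _ hcard d hd hsq
      obtain ⟨e⟩ : Nonempty ((Fin 2 ⊕ Fin m) ≃ ι) :=
        ⟨Fintype.equivOfCardEq (by simp only [Fintype.card_sum, Fintype.card_fin, hcard]; omega)⟩
      apply aux_transport e d
      set a := d (e (Sum.inl 0)) with ha_def
      set b := d (e (Sum.inl 1)) with hb_def
      set dm : Fin m → k := fun j => d (e (Sum.inr j)) with hdm_def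
      have hd' : d ∘ e = Sum.elim ![a, b] dm := by
        funext x
        rcases x with i | j
        · fin_cases i <;> rfl
        · rfl
      rw [hd']
      obtain ⟨N₂, hN₂u, hN₂⟩ := aux_two hq (hd (e (Sum.inl 0))) (hd (e (Sum.inl 1)))
      apply aux_congr (fromBlocks N₂ 0 0 (1 : Matrix (Fin m) (Fin m) k)) _
        (diagonal (Sum.elim ![1, a * b] dm))
      · rw [Matrix.det_fromBlocks_zero₁₂, Matrix.det_one, mul_one]; exact hN₂u
      · rw [← Matrix.fromBlocks_diagonal, ← Matrix.fromBlocks_diagonal,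
          Matrix.fromBlocks_transpose, Matrix.fromBlocks_multiply, Matrix.fromBlocks_multiply]
        simp [hN₂]
        rw [show N₂ * diagonal ![a, b] * N₂ᵀ = diagonal ![1, a * b] from hN₂, Matrix.fromBlocks_diagonal]
      · -- factor `diagonal (Sum.elim ![1, a*b] dm)`
        apply aux_transport (sigmaEquiv m)
        have hcomp : (Sum.elim ![1, a * b] dm) ∘ (sigmaEquiv m) =
            Sum.elim (fun _ : Fin 1 => (1 : k)) (Sum.elim (fun _ : Fin 1 => a * b) dm) := by
          funext x
          rcases x with i | i | j
          · fin_cases i; rfl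
          · fin_cases i; rfl
          · rfl
        rw [hcomp]
        apply aux_block
        · exact ⟨1, by simp, by simp⟩
        · apply ih (m + 1) (by omega) (Fin 1 ⊕ Fin m) (by simp only [Fintype.card_sum, Fintype.card_fin]; omega)
          · rintro (i | j)
            · exact mul_ne_zero (hd _) (hd _)
            · exact hd _
          · have key : ∏ x, Sum.elim (fun _ : Fin 1 => a * b) dm x = ∏ i, d i := by
              rw [Fintype.prod_sum_type, ← Equiv.prod_comp e d, Fintype.prod_sum_type]
              simp [Fin.prod_univ_two, Fin.prod_univ_one, ha_def, hb_def, hdm_def]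
              try ring
            rw [key]; exact hsq

end Aux

theorem symm_matrix_eq_XXt_iff_det_square
    {k : Type*} [Field k] [Fintype k] (hq : ringChar k ≠ 2) {n : ℕ}
    (A : Matrix (Fin n) (Fin n) k) (hsym : A = Aᵀ) (hA : IsUnit A.det) :
    (∃ X : Matrix (Fin n) (Fin n) k, IsUnit X.det ∧ A = X * Xᵀ) ↔
      IsSquare A.det := by
  constructor
  · rintro ⟨X, hX, rfl⟩
    exact ⟨X.det, by rw [Matrix.det_mul, Matrix.det_transpose]⟩
  · intro hAsq
    haveI : Invertible (2 : k) := invertibleOfNonzero (Ring.two_ne_zero hq)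
    set B := Matrix.toBilin' A with hB_def
    have hBsymm : B.IsSymm := by
      refine ⟨fun x y => ?_⟩
      simp only [RingHom.id_apply, hB_def, Matrix.toBilin'_apply']
      rw [Matrix.dotProduct_mulVec, ← Matrix.mulVec_transpose, ← hsym, dotProduct_comm]
    obtain ⟨v, hv⟩ := LinearMap.BilinForm.exists_orthogonal_basis (LinearMap.BilinForm.isSymm_iff.mp hBsymm)
    have hrank : Module.finrank k (Fin n → k) = n := Module.finrank_fin_fun k
    set v' : Module.Basis (Fin n) k (Fin n → k) := v.reindex (finCongr hrank) with hv'_def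
    have hv' : ∀ i j : Fin n, i ≠ j → B (v' i) (v' j) = 0 := by
      intro i j hij
      rw [hv'_def, Module.Basis.reindex_apply, Module.Basis.reindex_apply]
      exact hv (fun h => hij ((finCongr hrank).symm.injective h))
    set P := (Pi.basisFun k (Fin n)).toMatrix v' with hP_def
    haveI : Invertible P := (Pi.basisFun k (Fin n)).invertibleToMatrix v'
    have hPdet : IsUnit P.det := Matrix.isUnit_det_of_invertible P
    have hPT : IsUnit Pᵀ.det := by rwa [Matrix.det_transpose]
    have hPAP : Pᵀ * A * P = LinearMap.BilinForm.toMatrix v' B := by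
      have h1 : LinearMap.BilinForm.toMatrix (Pi.basisFun k (Fin n)) B = A := by
        rw [LinearMap.BilinForm.toMatrix_basisFun, hB_def, LinearMap.BilinForm.toMatrix'_toBilin']
      rw [← h1]
      exact LinearMap.BilinForm.toMatrix_mul_basis_toMatrix (Pi.basisFun k (Fin n)) v' B
    set dd : Fin n → k := fun i => B (v' i) (v' i) with hdd_def
    have hDdiag : LinearMap.BilinForm.toMatrix v' B = diagonal dd := by
      ext i j
      by_cases hij : i = j
      · subst hij; simp [LinearMap.BilinForm.toMatrix_apply, hdd_def]
      · rw [Matrix.diagonal_apply_ne _ hij, LinearMap.BilinForm.toMatrix_apply]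
        exact hv' i j hij
    have hDdet : IsUnit (diagonal dd).det := by
      rw [← hDdiag, ← hPAP, Matrix.det_mul, Matrix.det_mul]
      exact (hPT.mul hA).mul hPdet
    have hdd : ∀ i, dd i ≠ 0 := by
      rw [Matrix.det_diagonal] at hDdet
      intro i
      exact Finset.prod_ne_zero_iff.mp (isUnit_iff_ne_zero.mp hDdet) i (Finset.mem_univ i)
    obtain ⟨s, hs⟩ := hAsq
    have hsq' : IsSquare (∏ i, dd i) := by
      refine ⟨Pᵀ.det * s, ?_⟩
      rw [← Matrix.det_diagonal, ← hDdiag, ← hPAP, Matrix.det_mul, Matrix.det_mul, hs,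
        Matrix.det_transpose]
      ring
    obtain ⟨Y, hYdet, hYfac⟩ := diag_factor hq n (Fin n) (by simp) dd hdd hsq'
    refine ⟨(Pᵀ)⁻¹ * Y, ?_, ?_⟩
    · rw [Matrix.det_mul]
      exact ((Pᵀ).isUnit_nonsing_inv_det hPT).mul hYdet
    · have hA' : A = (Pᵀ)⁻¹ * (Pᵀ * A * P) * P⁻¹ := by
        rw [Matrix.mul_assoc Pᵀ A P, ← Matrix.mul_assoc (Pᵀ)⁻¹, Matrix.nonsing_inv_mul _ hPT,
          Matrix.one_mul, Matrix.mul_assoc, Matrix.mul_nonsing_inv _ hPdet, Matrix.mul_one]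
      rw [Matrix.transpose_mul, Matrix.transpose_nonsing_inv, Matrix.transpose_transpose]
      calc A = (Pᵀ)⁻¹ * (Pᵀ * A * P) * P⁻¹ := hA'
        _ = (Pᵀ)⁻¹ * (Y * Yᵀ) * P⁻¹ := by rw [hPAP, hDdiag, hYfac]
        _ = (Pᵀ)⁻¹ * Y * (Yᵀ * P⁻¹) := by simp only [Matrix.mul_assoc]
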